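/- Let G be a finitely generated nilpotent group whose torsion subgroup T is finite, and let O be a finite conjugacy class in G. Then the cardinality of O divides the cardinality of T. -/

import Mathlib

lemma conj_pow_comm_helper {H : Type*} [Group H] (h y c : H)
    (hc : ∀ t : H, c * t = t * c) (hdef : h * y * h⁻¹ * y⁻¹ = c) (k : ℕ) :
    h ^ k * y * (h ^ k)⁻¹ * y⁻¹ = c ^ k := by
  induction k with
  | zero => group
  | succ k ih =>
    have key : h ^ (k+1) * y * (h ^ (k+1))⁻¹ * y⁻¹
        = h * (h ^ k * y * (h ^ k)⁻¹ * y⁻¹) * (y * h⁻¹ * y⁻¹) := by group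
    rw [key, ih]
    have hck : h * c ^ k = c ^ k * h := ((Commute.pow_left (hc h) k).symm)
    rw [hck, pow_succ]
    have : h * (y * h⁻¹ * y⁻¹) = c := by rw [← hdef]; group
    rw [mul_assoc, this]

lemma mem_ucs_succ_iff_center {Q : Type*} [Group Q] (i : ℕ) (h : Q) :
    h ∈ Subgroup.upperCentralSeries Q (i+1) ↔
      QuotientGroup.mk (s := Subgroup.upperCentralSeries Q i) h ∈
        Subgroup.center (Q ⧸ Subgroup.upperCentralSeries Q i) := by
  have e : Subgroup.upperCentralSeries Q (i+1) = Subgroup.upperCentralSeriesStep (Subgroup.upperCentralSeries Q i) := rfl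
  rw [e, upperCentralSeriesStep_eq_comap_center, Subgroup.mem_comap]
  rfl

/-- In a torsion-free group, the upper central series factors are torsion-free. -/
lemma ucs_torsion_free {Q : Type*} [Group Q]
    (htf : ∀ (q : Q) (k : ℕ), 0 < k → q ^ k = 1 → q = 1) :
    ∀ (i : ℕ) (h : Q) (k : ℕ), 0 < k → h ∈ Subgroup.upperCentralSeries Q (i + 1) →
      h ^ k ∈ Subgroup.upperCentralSeries Q i → h ∈ Subgroup.upperCentralSeries Q i := by
  intro i
  induction i with
  | zero =>
    intro h k hk _ hpow
    rw [upperCentralSeries_zero, Subgroup.mem_bot] at *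
    exact htf h k hk hpow
  | succ i ih =>
    intro h k hk hmem hpow
    rw [mem_upperCentralSeries_succ_iff]
    intro y
    set c := h * y * h⁻¹ * y⁻¹ with hcdef
    have hcmem : c ∈ Subgroup.upperCentralSeries Q (i + 1) :=
      (mem_upperCentralSeries_succ_iff).mp hmem y
    have hccen := (mem_ucs_succ_iff_center i c).mp hcmem
    have hc : ∀ t : Q ⧸ Subgroup.upperCentralSeries Q i,
        QuotientGroup.mk (s := Subgroup.upperCentralSeries Q i) c * t
          = t * QuotientGroup.mk (s := Subgroup.upperCentralSeries Q i) c := by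
      intro t
      exact (Subgroup.mem_center_iff.mp hccen t).symm
    have h2 := conj_pow_comm_helper
      (QuotientGroup.mk (s := Subgroup.upperCentralSeries Q i) h)
      (QuotientGroup.mk (s := Subgroup.upperCentralSeries Q i) y)
      (QuotientGroup.mk (s := Subgroup.upperCentralSeries Q i) c)
      hc (by rw [hcdef]; simp) k
    have h3 : h ^ k * y * (h ^ k)⁻¹ * y⁻¹ ∈ Subgroup.upperCentralSeries Q i :=
      (mem_upperCentralSeries_succ_iff).mp hpow y
    have h4 : QuotientGroup.mk (s := Subgroup.upperCentralSeries Q i)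
        (h ^ k * y * (h ^ k)⁻¹ * y⁻¹) = 1 :=
      (QuotientGroup.eq_one_iff _).mpr h3
    have h5 : QuotientGroup.mk (s := Subgroup.upperCentralSeries Q i) c ^ k = 1 := by
      rw [← h2, ← h4]; simp
    have h6 : c ^ k ∈ Subgroup.upperCentralSeries Q i := by
      rw [← QuotientGroup.eq_one_iff (N := Subgroup.upperCentralSeries Q i)]
      rw [QuotientGroup.mk_pow]
      exact h5
    exact ih c k hk hcmem h6

/-- In a torsion-free nilpotent group, if a power of `g` commutes with `x`,
then `g` commutes with `x`. -/
lemma commute_of_pow_commute_tf {Q : Type*} [Group Q] [Group.IsNilpotent Q]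
    (htf : ∀ (q : Q) (k : ℕ), 0 < k → q ^ k = 1 → q = 1)
    (g x : Q) (d : ℕ) (hd : 0 < d) (hcomm : g ^ d * x = x * g ^ d) :
    g * x = x * g := by
  set s := g * x * g⁻¹ * x⁻¹ with hsdef
  -- descent step
  have step : ∀ i : ℕ, s ∈ Subgroup.upperCentralSeries Q (i + 1) → s ∈ Subgroup.upperCentralSeries Q i := by
    intro i hmem
    have hccen := (mem_ucs_succ_iff_center i s).mp hmem
    have hc : ∀ t : Q ⧸ Subgroup.upperCentralSeries Q i,
        QuotientGroup.mk (s := Subgroup.upperCentralSeries Q i) s * t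
          = t * QuotientGroup.mk (s := Subgroup.upperCentralSeries Q i) s :=
      fun t => (Subgroup.mem_center_iff.mp hccen t).symm
    have h2 := conj_pow_comm_helper
      (QuotientGroup.mk (s := Subgroup.upperCentralSeries Q i) g)
      (QuotientGroup.mk (s := Subgroup.upperCentralSeries Q i) x)
      (QuotientGroup.mk (s := Subgroup.upperCentralSeries Q i) s)
      hc (by rw [hsdef]; simp) d
    have h3 : g ^ d * x * (g ^ d)⁻¹ * x⁻¹ = 1 := by
      rw [hcomm]; group
    have h4 : QuotientGroup.mk (s := Subgroup.upperCentralSeries Q i) s ^ d = 1 := by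
      rw [← h2]
      have : ((g : Q) ^ d * x * (g ^ d)⁻¹ * x⁻¹ : Q) = 1 := h3
      calc QuotientGroup.mk (s := Subgroup.upperCentralSeries Q i) g ^ d
            * QuotientGroup.mk (s := Subgroup.upperCentralSeries Q i) x
            * (QuotientGroup.mk (s := Subgroup.upperCentralSeries Q i) g ^ d)⁻¹
            * (QuotientGroup.mk (s := Subgroup.upperCentralSeries Q i) x)⁻¹
          = QuotientGroup.mk (s := Subgroup.upperCentralSeries Q i)
              (g ^ d * x * (g ^ d)⁻¹ * x⁻¹) := by simp
        _ = 1 := by rw [h3]; simp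
    have h6 : s ^ d ∈ Subgroup.upperCentralSeries Q i := by
      rw [← QuotientGroup.eq_one_iff (N := Subgroup.upperCentralSeries Q i), QuotientGroup.mk_pow]
      exact h4
    exact ucs_torsion_free htf i s d hd hmem h6
  -- s lies in some term of the series which is ⊤, descend to ⊥
  obtain ⟨n, hn⟩ := Group.IsNilpotent.nilpotent (G := Q)
  have : ∀ m : ℕ, s ∈ Subgroup.upperCentralSeries Q m → s ∈ Subgroup.upperCentralSeries Q 0 := by
    intro m
    induction m with
    | zero => exact fun h => h
    | succ m ih => exact fun h => ih (step m h)
  have hs1 : s = 1 := by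
    have := this n (by rw [hn]; trivial)
    rwa [upperCentralSeries_zero, Subgroup.mem_bot] at this
  have : g * x * g⁻¹ * x⁻¹ = 1 := hs1
  calc g * x = (g * x * g⁻¹ * x⁻¹) * (x * g) := by group
    _ = x * g := by rw [this]; group

/-- key fact: commutators with `x` land in the torsion subgroup. -/
lemma commutator_mem_torsion {G : Type*} [Group G] (hnil : Group.IsNilpotent G)
    (T : Subgroup G) (hT : ∀ g : G, g ∈ T ↔ IsOfFinOrder g)
    (x : G) (hOfin : ({y : G | ∃ g : G, g * x * g⁻¹ = y}).Finite) :
    ∀ g : G, g * x * g⁻¹ * x⁻¹ ∈ T := by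
  haveI := hnil
  haveI : T.Normal := by
    constructor
    intro t ht g
    rw [hT] at ht ⊢
    obtain ⟨n, hn, h1⟩ := (isOfFinOrder_iff_pow_eq_one).mp ht
    exact (isOfFinOrder_iff_pow_eq_one).mpr ⟨n, hn, by
      rw [conj_pow, h1, mul_one, mul_inv_cancel]⟩
  intro g
  -- torsion-freeness of G ⧸ T
  have htf : ∀ (q : G ⧸ T) (k : ℕ), 0 < k → q ^ k = 1 → q = 1 := by
    intro q k hk hqk
    obtain ⟨a, rfl⟩ := QuotientGroup.mk_surjective q
    rw [← QuotientGroup.mk_pow, QuotientGroup.eq_one_iff] at hqk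
    rw [QuotientGroup.eq_one_iff]
    rw [hT] at hqk ⊢
    obtain ⟨m, hm, h1⟩ := (isOfFinOrder_iff_pow_eq_one).mp hqk
    exact (isOfFinOrder_iff_pow_eq_one).mpr ⟨k * m, Nat.mul_pos hk hm, by
      rw [pow_mul]; exact h1⟩
  -- pigeonhole: some positive power of g commutes with x
  have key : ∀ i j : ℕ, i < j → g ^ i * x * (g ^ i)⁻¹ = g ^ j * x * (g ^ j)⁻¹ →
      ∃ d : ℕ, 0 < d ∧ g ^ d * x = x * g ^ d := by
    intro i j hlt heq
    refine ⟨j - i, by omega, ?_⟩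
    set a := g ^ (j - i) with ha
    set b := g ^ i with hb
    have hj : g ^ j = a * b := by rw [ha, hb, ← pow_add]; congr 1; omega
    rw [hj] at heq
    have hab : b * a = a * b := by rw [ha, hb, ← pow_add, ← pow_add]; congr 1; omega
    have hba : b⁻¹ * a * b = a := by
      rw [show b⁻¹ * a * b = b⁻¹ * (a * b) by group, ← hab]; group
    have e1 : x = b⁻¹ * a * b * x * (b⁻¹ * a * b)⁻¹ := by
      calc x = b⁻¹ * (b * x * b⁻¹) * b := by group
        _ = b⁻¹ * (a * b * x * (a * b)⁻¹) * b := by rw [heq]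
        _ = b⁻¹ * a * b * x * (b⁻¹ * a * b)⁻¹ := by group
    rw [hba] at e1
    calc a * x = a * x * a⁻¹ * a := by group
      _ = x * a := by rw [← e1]
  have hpig : ∃ d : ℕ, 0 < d ∧ g ^ d * x = x * g ^ d := by
    haveI := hOfin.to_subtype
    have hmem : ∀ k : ℕ, g ^ k * x * (g ^ k)⁻¹ ∈ {y : G | ∃ g : G, g * x * g⁻¹ = y} :=
      fun k => ⟨g ^ k, rfl⟩
    obtain ⟨i, j, hij, heq⟩ := Finite.exists_ne_map_eq_of_infinite
      (fun k : ℕ => (⟨g ^ k * x * (g ^ k)⁻¹, hmem k⟩ :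
        {y : G | ∃ g : G, g * x * g⁻¹ = y}))
    rw [Subtype.mk_eq_mk] at heq
    rcases Nat.lt_or_gt_of_ne hij with hlt | hgt
    · exact key i j hlt heq
    · exact key j i hgt heq.symm
  obtain ⟨d, hd, hcomm⟩ := hpig
  have := commute_of_pow_commute_tf (Q := G ⧸ T) htf
    (QuotientGroup.mk (s := T) g) (QuotientGroup.mk (s := T) x) d hd
    (by
      calc (QuotientGroup.mk (s := T) g) ^ d * QuotientGroup.mk (s := T) x
          = QuotientGroup.mk (s := T) (g ^ d * x) := by simp
        _ = QuotientGroup.mk (s := T) (x * g ^ d) := by rw [hcomm]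
        _ = QuotientGroup.mk (s := T) x * (QuotientGroup.mk (s := T) g) ^ d := by simp)
  rw [← QuotientGroup.eq_one_iff (N := T)]
  calc QuotientGroup.mk (s := T) (g * x * g⁻¹ * x⁻¹)
      = QuotientGroup.mk (s := T) (g * x) * (QuotientGroup.mk (s := T) (x * g))⁻¹ := by
        rw [← QuotientGroup.mk_inv, ← QuotientGroup.mk_mul]; congr 1; group
    _ = 1 := by
        rw [QuotientGroup.mk_mul, QuotientGroup.mk_mul, this]
        group


/-- In a nilpotent group, a nontrivial normal subgroup meets the center nontrivially. -/
lemma normal_inf_center_ne_bot {G : Type*} [Group G] (hnil : Group.IsNilpotent G)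
    (N : Subgroup G) (hN : N.Normal) (hnt : N ≠ ⊥) :
    ∃ a : G, a ∈ N ∧ a ∈ Subgroup.center G ∧ a ≠ 1 := by
  haveI := hnil
  obtain ⟨n, hn⟩ := Group.IsNilpotent.nilpotent (G := G)
  have hex : ∃ i : ℕ, ∃ a : G, a ∈ N ∧ a ∈ Subgroup.upperCentralSeries G i ∧ a ≠ 1 := by
    obtain ⟨⟨a, ha⟩, hane⟩ := (Subgroup.ne_bot_iff_exists_ne_one.mp hnt)
    refine ⟨n, a, ha, by rw [hn]; trivial, ?_⟩
    simpa [Subtype.ext_iff] using hane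
  classical
  let i₀ := Nat.find hex
  obtain ⟨a, haN, haZ, hane⟩ := Nat.find_spec hex
  have hi₀ : i₀ ≠ 0 := by
    intro h0
    have := Nat.find_spec hex
    rw [show Nat.find hex = i₀ from rfl, h0] at this
    obtain ⟨b, hbN, hbZ, hbne⟩ := this
    rw [upperCentralSeries_zero, Subgroup.mem_bot] at hbZ
    exact hbne hbZ
  obtain ⟨m, hm⟩ := Nat.exists_eq_succ_of_ne_zero hi₀
  refine ⟨a, haN, ?_, hane⟩
  rw [Subgroup.mem_center_iff]
  intro y
  -- [a, y⁻¹-style] commutator lies in N ⊓ Z_m = ⊥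
  have hcomm : a * y * a⁻¹ * y⁻¹ ∈ Subgroup.upperCentralSeries G m := by
    have : a ∈ Subgroup.upperCentralSeries G (m + 1) := by
      have : Nat.find hex = m + 1 := by rw [show Nat.find hex = i₀ from rfl, hm]
      rwa [this] at haZ
    exact (mem_upperCentralSeries_succ_iff).mp this y
  have hcommN : a * y * a⁻¹ * y⁻¹ ∈ N := by
    have h1 : y * a⁻¹ * y⁻¹ ∈ N := hN.conj_mem a⁻¹ (N.inv_mem haN) y
    have := N.mul_mem haN h1
    simpa [mul_assoc] using this
  by_cases hc : a * y * a⁻¹ * y⁻¹ = 1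
  · have : a * y = y * a := by
      calc a * y = (a * y * a⁻¹ * y⁻¹) * (y * a) := by group
        _ = y * a := by rw [hc]; group
    exact this.symm
  · exfalso
    have hlt : m < i₀ := by omega
    have := Nat.find_min hex hlt
    exact this ⟨a * y * a⁻¹ * y⁻¹, hcommN, hcomm, hc⟩

universe u

theorem aux_card_dvd (t : ℕ) : ∀ {G : Type u} [inst : Group G] (hnil : Group.IsNilpotent G)
    (T : Subgroup G), (∀ g : G, g ∈ T ↔ IsOfFinOrder g) → (T : Set G).Finite →
    Nat.card T = t → ∀ x : G, ({y : G | ∃ g : G, g * x * g⁻¹ = y}).Finite →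
    Nat.card ({y : G | ∃ g : G, g * x * g⁻¹ = y}) ∣ Nat.card T := by
  induction t using Nat.strong_induction_on with
  | _ t IH =>
  intro G instG hnil T hT hTfin hcardt x hOfin
  haveI := hnil
  set O : Set G := {y : G | ∃ g : G, g * x * g⁻¹ = y} with hOdef
  have hA : ∀ g : G, g * x * g⁻¹ * x⁻¹ ∈ T := commutator_mem_torsion hnil T hT x hOfin
  by_cases hcen : ∀ g : G, g * x * g⁻¹ = x
  · have hOx : O = {x} := by
      ext y
      constructor
      · rintro ⟨g, rfl⟩; simp [hcen g]
      · rintro rfl; exact ⟨1, by group⟩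
    rw [hOx, Nat.card_coe_set_eq, Set.ncard_singleton]
    exact one_dvd _
  · push_neg at hcen
    obtain ⟨g₀, hg₀⟩ := hcen
    -- the subgroup generated by commutators with x
    set S : Set G := {z : G | ∃ g : G, g * x * g⁻¹ * x⁻¹ = z} with hSdef
    set N : Subgroup G := Subgroup.closure S with hNdef
    have hNle : N ≤ T := (Subgroup.closure_le T).mpr (by rintro z ⟨g, rfl⟩; exact hA g)
    have hNnormal : N.Normal := by
      constructor
      intro n hn h
      induction hn using Subgroup.closure_induction'' with
      | one => simpa using N.one_mem
      | mem z hz =>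
        obtain ⟨g, rfl⟩ := hz
        have e : h * (g * x * g⁻¹ * x⁻¹) * h⁻¹
            = (h * g * x * (h * g)⁻¹ * x⁻¹) * (h * x * h⁻¹ * x⁻¹)⁻¹ := by group
        rw [e]
        exact N.mul_mem (Subgroup.subset_closure ⟨h * g, rfl⟩)
          (N.inv_mem (Subgroup.subset_closure ⟨h, rfl⟩))
      | inv_mem z hz =>
        obtain ⟨g, rfl⟩ := hz
        have e : h * (g * x * g⁻¹ * x⁻¹)⁻¹ * h⁻¹
            = ((h * g * x * (h * g)⁻¹ * x⁻¹) * (h * x * h⁻¹ * x⁻¹)⁻¹)⁻¹ := by group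
        rw [e]
        exact N.inv_mem (N.mul_mem (Subgroup.subset_closure ⟨h * g, rfl⟩)
          (N.inv_mem (Subgroup.subset_closure ⟨h, rfl⟩)))
      | mul a b _ _ iha ihb =>
        have e : h * (a * b) * h⁻¹ = (h * a * h⁻¹) * (h * b * h⁻¹) := by group
        rw [e]
        exact N.mul_mem iha ihb
    have hNne : N ≠ ⊥ := by
      intro hbot
      have : g₀ * x * g₀⁻¹ * x⁻¹ ∈ N := Subgroup.subset_closure ⟨g₀, rfl⟩
      rw [hbot, Subgroup.mem_bot] at this
      apply hg₀
      calc g₀ * x * g₀⁻¹ = (g₀ * x * g₀⁻¹ * x⁻¹) * x := by group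
        _ = x := by rw [this]; group
    obtain ⟨a, haN, haC, hane⟩ := normal_inf_center_ne_bot hnil N hNnormal hNne
    set M : Subgroup G := N ⊓ Subgroup.center G with hMdef
    have hMle : M ≤ T := le_trans inf_le_left hNle
    have hMcen : ∀ w : G, w ∈ M → ∀ u : G, u * w = w * u := by
      intro w hw u
      exact Subgroup.mem_center_iff.mp hw.2 u
    haveI hMnormal : M.Normal := by
      constructor
      intro m hm g
      have : g * m * g⁻¹ = m := by rw [hMcen m hm g]; group
      rw [this]; exact hm
    -- the quotient group
    set Q := G ⧸ M with hQdef
    set π : G →* Q := QuotientGroup.mk' M with hπdef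
    have hπsurj : Function.Surjective π := QuotientGroup.mk'_surjective M
    have hπone : ∀ w : G, π w = 1 ↔ w ∈ M := by
      intro w
      rw [hπdef]
      exact QuotientGroup.eq_one_iff w
    haveI hQnil : Group.IsNilpotent Q := inferInstance
    set T' : Subgroup Q := T.map π with hT'def
    have hT' : ∀ q : Q, q ∈ T' ↔ IsOfFinOrder q := by
      intro q
      constructor
      · rintro ⟨g, hg, rfl⟩
        rw [SetLike.mem_coe, hT] at hg
        obtain ⟨n, hn, h1⟩ := isOfFinOrder_iff_pow_eq_one.mp hg
        exact isOfFinOrder_iff_pow_eq_one.mpr ⟨n, hn, by rw [← map_pow, h1, map_one]⟩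
      · intro hq
        obtain ⟨g, rfl⟩ := hπsurj q
        obtain ⟨n, hn, h1⟩ := isOfFinOrder_iff_pow_eq_one.mp hq
        rw [← map_pow, hπone] at h1
        have hgn : IsOfFinOrder (g ^ n) := (hT _).mp (hMle h1)
        obtain ⟨m, hm, h2⟩ := isOfFinOrder_iff_pow_eq_one.mp hgn
        have hg : g ∈ T := (hT g).mpr
          (isOfFinOrder_iff_pow_eq_one.mpr ⟨n * m, Nat.mul_pos hn hm, by rw [pow_mul]; exact h2⟩)
        exact ⟨g, hg, rfl⟩
    have hT'fin : ((T' : Set Q)).Finite := by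
      rw [hT'def, Subgroup.coe_map]
      exact hTfin.image π
    haveI : Finite (T : Set G) := hTfin.to_subtype
    haveI : Finite T := Finite.of_equiv _ (Equiv.refl _)
    haveI : Finite M := Finite.Set.subset (T : Set G) hMle
    haveI : Finite T' := hT'fin.to_subtype
    -- cardinality decomposition for T
    have hcardT : Nat.card T = Nat.card T' * Nat.card M := by
      set φ : T →* Q := π.comp T.subtype with hφdef
      have hker : φ.ker = M.subgroupOf T := by
        ext w
        simp only [MonoidHom.mem_ker, hφdef, MonoidHom.comp_apply, Subgroup.coe_subtype,
          Subgroup.mem_subgroupOf]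
        exact hπone w
      have hrange : φ.range = T' := by
        ext q
        simp only [MonoidHom.mem_range, hφdef, MonoidHom.comp_apply, Subgroup.coe_subtype,
          hT'def, Subgroup.mem_map, Subtype.exists]
        constructor
        · rintro ⟨g, hg, rfl⟩; exact ⟨g, hg, rfl⟩
        · rintro ⟨g, hg, rfl⟩; exact ⟨g, hg, rfl⟩
      have h1 : Nat.card T = Nat.card (T ⧸ φ.ker) * Nat.card φ.ker :=
        Subgroup.card_eq_card_quotient_mul_card_subgroup φ.ker
      have h2 : Nat.card (T ⧸ φ.ker) = Nat.card T' := by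
        rw [← hrange]
        exact Nat.card_congr (QuotientGroup.quotientKerEquivRange φ).toEquiv
      have h3 : Nat.card φ.ker = Nat.card M := by
        rw [hker]
        exact Nat.card_congr (Subgroup.subgroupOfEquivOfLe hMle).toEquiv
      rw [h1, h2, h3]
    have hMne : M ≠ ⊥ := by
      rw [Subgroup.ne_bot_iff_exists_ne_one]
      refine ⟨⟨a, haN, haC⟩, ?_⟩
      simp [Subtype.ext_iff, hane]
    have hMcard : 1 < Nat.card M := (Subgroup.one_lt_card_iff_ne_bot M).mpr hMne
    have hT'pos : 0 < Nat.card T' := Nat.card_pos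
    have hlt : Nat.card T' < t := by
      rw [← hcardt, hcardT]
      exact (lt_mul_iff_one_lt_right hT'pos).mpr hMcard
    -- the conjugacy class in the quotient
    set O' : Set Q := {y : Q | ∃ q : Q, q * π x * q⁻¹ = y} with hO'def
    have hO'img : O' = π '' O := by
      ext y
      constructor
      · rintro ⟨q, rfl⟩
        obtain ⟨h, rfl⟩ := hπsurj q
        exact ⟨h * x * h⁻¹, ⟨h, rfl⟩, by rw [map_mul, map_mul, map_inv]⟩
      · rintro ⟨z, ⟨h, rfl⟩, rfl⟩
        exact ⟨π h, by rw [map_mul, map_mul, map_inv]⟩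
    have hO'fin : O'.Finite := by rw [hO'img]; exact hOfin.image π
    have hdvd' : Nat.card O' ∣ Nat.card T' :=
      IH (Nat.card T') hlt hQnil T' hT' hT'fin rfl (π x) hO'fin
    -- the subgroup W of M measuring the fibers
    set W : Subgroup G := {
      carrier := {w : G | w ∈ M ∧ w * x ∈ O}
      one_mem' := ⟨M.one_mem, by rw [one_mul]; exact ⟨1, by group⟩⟩
      mul_mem' := by
        rintro w₁ w₂ ⟨hm₁, g₁, hg₁⟩ ⟨hm₂, g₂, hg₂⟩
        refine ⟨M.mul_mem hm₁ hm₂, ⟨g₂ * g₁, ?_⟩⟩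
        calc (g₂ * g₁) * x * (g₂ * g₁)⁻¹ = g₂ * (g₁ * x * g₁⁻¹) * g₂⁻¹ := by group
          _ = g₂ * (w₁ * x) * g₂⁻¹ := by rw [hg₁]
          _ = g₂ * w₁ * (x * g₂⁻¹) := by group
          _ = w₁ * g₂ * (x * g₂⁻¹) := by rw [hMcen w₁ hm₁ g₂]
          _ = w₁ * (g₂ * x * g₂⁻¹) := by group
          _ = w₁ * (w₂ * x) := by rw [hg₂]
          _ = w₁ * w₂ * x := by group
      inv_mem' := by
        rintro w ⟨hm, g, hg⟩
        refine ⟨M.inv_mem hm, ⟨g⁻¹, ?_⟩⟩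
        have h1 : g⁻¹ * (g * x * g⁻¹) * g = x := by group
        rw [hg] at h1
        have h2 : w * (g⁻¹ * x * g) = x := by
          calc w * (g⁻¹ * x * g) = w * g⁻¹ * (x * g) := by group
            _ = g⁻¹ * w * (x * g) := by rw [← hMcen w hm g⁻¹]
            _ = g⁻¹ * (w * x) * g := by group
            _ = x := h1
        calc g⁻¹ * x * (g⁻¹)⁻¹ = w⁻¹ * (w * (g⁻¹ * x * g)) := by group
          _ = w⁻¹ * x := by rw [h2] } with hWdef
    have hWleM : W ≤ M := fun w hw => hw.1
    have hWdvd : Nat.card W ∣ Nat.card M := by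
      have h1 := Subgroup.card_subgroup_dvd_card (W.subgroupOf M)
      have he : Nat.card (W.subgroupOf M) = Nat.card W :=
        Nat.card_congr (Subgroup.subgroupOfEquivOfLe hWleM).toEquiv
      rw [← he]
      exact h1
    -- the projection from O to O'
    have hfmem : ∀ z : O, π z.1 ∈ O' := by
      rintro ⟨z, g, rfl⟩
      exact ⟨π g, by rw [map_mul, map_mul, map_inv]⟩
    set f : O → O' := fun z => ⟨π z.1, hfmem z⟩ with hfdef
    have hfib : ∀ y' : O', Nonempty ({z : O // f z = y'} ≃ W) := by
      intro y'
      obtain ⟨q, hq⟩ := y'.2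
      obtain ⟨h, rfl⟩ := hπsurj q
      have hh : π h * π x * (π h)⁻¹ = (y' : Q) := hq
      have hmemO : ∀ w : W, h * (w.1 * x) * h⁻¹ ∈ O := by
        rintro ⟨w, hwM, g, hg⟩
        refine ⟨h * g, ?_⟩
        calc (h * g) * x * (h * g)⁻¹ = h * (g * x * g⁻¹) * h⁻¹ := by group
          _ = h * (w * x) * h⁻¹ := by rw [hg]
      set F : W → {z : O // f z = y'} := fun w =>
        ⟨⟨h * (w.1 * x) * h⁻¹, hmemO w⟩, by
          apply Subtype.ext
          show π (h * (w.1 * x) * h⁻¹) = (y' : Q)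
          have hw1 : π w.1 = 1 := (hπone _).mpr w.2.1
          rw [map_mul, map_mul, map_inv, map_mul, hw1, one_mul, hh]⟩ with hFdef
      have hFinj : Function.Injective F := by
        intro w w' hww
        have h1 : h * (w.1 * x) * h⁻¹ = h * (w'.1 * x) * h⁻¹ :=
          congrArg (fun u => (u.1 : G)) hww
        apply Subtype.ext
        exact mul_right_cancel (mul_left_cancel (mul_right_cancel h1))
      have hFsurj : Function.Surjective F := by
        rintro ⟨⟨z, hzO⟩, hz⟩
        have hzq : π z = (y' : Q) := congrArg Subtype.val hz
        set w := h⁻¹ * z * h * x⁻¹ with hwdef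
        have hwM : w ∈ M := by
          rw [← hπone]
          rw [hwdef, map_mul, map_mul, map_mul, map_inv, map_inv, hzq, ← hh]
          group
        have hwxO : w * x ∈ O := by
          obtain ⟨g, hg⟩ := hzO
          refine ⟨h⁻¹ * g, ?_⟩
          calc (h⁻¹ * g) * x * (h⁻¹ * g)⁻¹ = h⁻¹ * (g * x * g⁻¹) * h := by group
            _ = h⁻¹ * z * h := by rw [hg]
            _ = w * x := by rw [hwdef]; group
        refine ⟨⟨w, hwM, hwxO⟩, ?_⟩
        apply Subtype.ext
        apply Subtype.ext
        show h * (w * x) * h⁻¹ = z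
        rw [hwdef]
        group
      exact ⟨(Equiv.ofBijective F ⟨hFinj, hFsurj⟩).symm⟩
    have hcount : Nat.card O = Nat.card O' * Nat.card W := by
      calc Nat.card O = Nat.card (Σ y' : O', {z : O // f z = y'}) :=
            Nat.card_congr (Equiv.sigmaFiberEquiv f).symm
        _ = Nat.card (O' × W) :=
            Nat.card_congr ((Equiv.sigmaCongrRight (fun y' => (hfib y').some)).trans
              (Equiv.sigmaEquivProd O' W))
        _ = Nat.card O' * Nat.card W := Nat.card_prod _ _
    show Nat.card O ∣ Nat.card T
    rw [hcount, hcardT]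
    exact mul_dvd_mul hdvd' hWdvd




/-- If `G` is a finitely generated nilpotent group with finite torsion subgroup `T` and
`O` is a finite conjugacy class in `G`, then `|O|` divides `|T|`. -/
theorem card_conjClass_dvd_card_torsion
    {G : Type*} [Group G] (hfg : Group.FG G) (hnil : Group.IsNilpotent G)
    (T : Subgroup G) (hT : ∀ g : G, g ∈ T ↔ IsOfFinOrder g)
    (hTfin : (T : Set G).Finite)
    (x : G) (hOfin : ({y : G | ∃ g : G, g * x * g⁻¹ = y}).Finite) :
    Nat.card ({y : G | ∃ g : G, g * x * g⁻¹ = y}) ∣ Nat.card T :=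
  aux_card_dvd (Nat.card T) hnil T hT hTfin rfl x hOfin
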